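/- (Rank inequality) If A and B are n×n Hermitian matrices, then sup_{x∈ℝ} |F_A(x) − F_B(x)| ≤ rank(A − B)/n. -/

import Mathlib

open Matrix Finset

/-- Distribution function of the empirical spectral distribution of a Hermitian matrix. -/
noncomputable def specDistFun {n : ℕ} {A : Matrix (Fin n) (Fin n) ℂ}
    (hA : A.IsHermitian) (x : ℝ) : ℝ :=
  ((Finset.univ.filter fun i => hA.eigenvalues i ≤ x).card : ℝ) / n

section Aux

variable {n : ℕ}

lemma repr_eq_zero_of_not_mem (b : OrthonormalBasis (Fin n) ℂ (EuclideanSpace ℂ (Fin n)))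
    (s : Finset (Fin n)) {v : EuclideanSpace ℂ (Fin n)}
    (hv : v ∈ Submodule.span ℂ (b '' s)) {i : Fin n} (hi : i ∉ s) :
    b.repr v i = 0 := by
  rw [OrthonormalBasis.repr_apply_apply]
  induction hv using Submodule.span_induction with
  | mem w hw =>
    obtain ⟨j, hj, rfl⟩ := hw
    exact b.orthonormal.2 (fun h => hi (h ▸ hj))
  | zero => simp
  | add u w _ _ hu hw => rw [inner_add_right, hu, hw, add_zero]
  | smul c u _ hu => rw [inner_smul_right, hu, mul_zero]

lemma finrank_span_image (b : OrthonormalBasis (Fin n) ℂ (EuclideanSpace ℂ (Fin n)))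
    (s : Finset (Fin n)) :
    Module.finrank ℂ (Submodule.span ℂ (b '' s) : Submodule ℂ (EuclideanSpace ℂ (Fin n)))
      = s.card := by
  have h : LinearIndependent ℂ (fun i : s => b i) :=
    b.toBasis.linearIndependent.comp _ Subtype.coe_injective
  have him : (b '' (s : Set (Fin n))) = Set.range (fun i : s => b i) := by
    ext w; simp
  rw [him, finrank_span_eq_card h, Fintype.card_coe]

lemma toEuclideanLin_eigenvectorBasis {M : Matrix (Fin n) (Fin n) ℂ} (hM : M.IsHermitian)
    (i : Fin n) :
    Matrix.toEuclideanLin M (hM.eigenvectorBasis i)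
      = (hM.eigenvalues i : ℂ) • hM.eigenvectorBasis i := by
  have h := hM.mulVec_eigenvectorBasis i
  apply (WithLp.equiv 2 (Fin n → ℂ)).injective
  ext j
  have := congrFun h j
  simpa [Matrix.toEuclideanLin_apply] using this

lemma re_inner_toEuclideanLin {M : Matrix (Fin n) (Fin n) ℂ} (hM : M.IsHermitian)
    (v : EuclideanSpace ℂ (Fin n)) :
    Complex.re (inner ℂ v (Matrix.toEuclideanLin M v))
      = ∑ i, hM.eigenvalues i * ‖hM.eigenvectorBasis.repr v i‖ ^ 2 := by
  set b := hM.eigenvectorBasis with hb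
  have hrepr : ∀ i, b.repr (Matrix.toEuclideanLin M v) i = (hM.eigenvalues i : ℂ) * b.repr v i := by
    intro i
    rw [OrthonormalBasis.repr_apply_apply, OrthonormalBasis.repr_apply_apply,
      ← (Matrix.isHermitian_iff_isSymmetric.1 hM) (b i) v, toEuclideanLin_eigenvectorBasis hM i,
      inner_smul_left]
    simp [hb]
  have key : (inner ℂ v (Matrix.toEuclideanLin M v) : ℂ)
      = ∑ i, (hM.eigenvalues i : ℂ) * (‖b.repr v i‖ : ℂ) ^ 2 := by
    rw [← b.repr.inner_map_map v (Matrix.toEuclideanLin M v)]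
    rw [PiLp.inner_apply]
    refine Finset.sum_congr rfl fun i _ => ?_
    rw [hrepr i]
    have : (inner ℂ (b.repr v i) ((hM.eigenvalues i : ℂ) * b.repr v i) : ℂ)
        = (starRingEnd ℂ) (b.repr v i) * ((hM.eigenvalues i : ℂ) * b.repr v i) := by
      rw [RCLike.inner_apply]; ring
    have h2 : (starRingEnd ℂ) (b.repr v i) * ((hM.eigenvalues i : ℂ) * b.repr v i)
        = (hM.eigenvalues i : ℂ) * (b.repr v i * (starRingEnd ℂ) (b.repr v i)) := by ring
    rw [this, h2, Complex.mul_conj]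
    rw [Complex.normSq_eq_norm_sq]
    push_cast
    ring
  rw [key]
  rw [Complex.re_sum]
  refine Finset.sum_congr rfl fun i _ => ?_
  norm_cast

lemma norm_sq_eq_sum (b : OrthonormalBasis (Fin n) ℂ (EuclideanSpace ℂ (Fin n)))
    (v : EuclideanSpace ℂ (Fin n)) :
    ‖v‖ ^ 2 = ∑ i, ‖b.repr v i‖ ^ 2 := by
  rw [← LinearIsometryEquiv.norm_map b.repr v, EuclideanSpace.norm_eq,
    Real.sq_sqrt (by positivity)]

lemma re_le_of_mem_span {M : Matrix (Fin n) (Fin n) ℂ} (hM : M.IsHermitian) {x : ℝ}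
    {v : EuclideanSpace ℂ (Fin n)}
    (hv : v ∈ Submodule.span ℂ
      (hM.eigenvectorBasis '' (Finset.univ.filter fun i => hM.eigenvalues i ≤ x))) :
    Complex.re (inner ℂ v (Matrix.toEuclideanLin M v)) ≤ x * ‖v‖ ^ 2 := by
  rw [re_inner_toEuclideanLin hM, norm_sq_eq_sum hM.eigenvectorBasis, Finset.mul_sum]
  refine Finset.sum_le_sum fun i _ => ?_
  by_cases hi : hM.eigenvalues i ≤ x
  · exact mul_le_mul_of_nonneg_right hi (by positivity)
  · have h0 : hM.eigenvectorBasis.repr v i = 0 :=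
      repr_eq_zero_of_not_mem _ _ hv (by simp [hi])
    simp [h0]

lemma lt_re_of_mem_span {M : Matrix (Fin n) (Fin n) ℂ} (hM : M.IsHermitian) {x : ℝ}
    {v : EuclideanSpace ℂ (Fin n)}
    (hv : v ∈ Submodule.span ℂ
      (hM.eigenvectorBasis '' (Finset.univ.filter fun i => x < hM.eigenvalues i)))
    (hv0 : v ≠ 0) :
    x * ‖v‖ ^ 2 < Complex.re (inner ℂ v (Matrix.toEuclideanLin M v)) := by
  rw [re_inner_toEuclideanLin hM, norm_sq_eq_sum hM.eigenvectorBasis, Finset.mul_sum]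
  have hz : ∀ i, ¬ x < hM.eigenvalues i → hM.eigenvectorBasis.repr v i = 0 := fun i hi =>
    repr_eq_zero_of_not_mem _ _ hv (by simp [hi])
  obtain ⟨j, hj⟩ : ∃ j, hM.eigenvectorBasis.repr v j ≠ 0 := by
    by_contra hcon
    push_neg at hcon
    exact hv0 (by
      apply hM.eigenvectorBasis.repr.injective
      ext i
      simp [hcon i])
  have hjx : x < hM.eigenvalues j := by
    by_contra hjx
    exact hj (hz j hjx)
  refine Finset.sum_lt_sum (fun i _ => ?_) ⟨j, Finset.mem_univ j, ?_⟩
  · by_cases hi : x < hM.eigenvalues i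
    · exact mul_le_mul_of_nonneg_right hi.le (by positivity)
    · simp [hz i hi]
  · exact mul_lt_mul_of_pos_right hjx (pow_pos (norm_pos_iff.2 hj) 2)

lemma finrank_range_toEuclideanLin (M : Matrix (Fin n) (Fin n) ℂ) :
    Module.finrank ℂ (LinearMap.range (Matrix.toEuclideanLin M)) = M.rank := by
  rw [Matrix.toEuclideanLin_eq_toLin]
  exact (Matrix.rank_eq_finrank_range_toLin M (PiLp.basisFun 2 ℂ (Fin n))
    (PiLp.basisFun 2 ℂ (Fin n))).symm

lemma card_le_card_add_rank (A B : Matrix (Fin n) (Fin n) ℂ)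
    (hA : A.IsHermitian) (hB : B.IsHermitian) (x : ℝ) :
    (Finset.univ.filter fun i => hA.eigenvalues i ≤ x).card
      ≤ (Finset.univ.filter fun i => hB.eigenvalues i ≤ x).card + (A - B).rank := by
  by_contra hcon
  push_neg at hcon
  set sA := Finset.univ.filter fun i => hA.eigenvalues i ≤ x with hsA
  set sB := Finset.univ.filter fun i => x < hB.eigenvalues i with hsB
  have hsBcard : sB.card + (Finset.univ.filter fun i => hB.eigenvalues i ≤ x).card = n := by
    rw [hsB]
    have := Finset.card_filter_add_card_filter_not
      (s := (Finset.univ : Finset (Fin n))) (p := fun i => x < hB.eigenvalues i)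
    simp only [not_lt] at this
    simpa using this
  set SA := Submodule.span ℂ (hA.eigenvectorBasis '' sA) with hSAdef
  set SB := Submodule.span ℂ (hB.eigenvectorBasis '' sB) with hSBdef
  set K := LinearMap.ker (Matrix.toEuclideanLin (A - B)) with hKdef
  clear_value K
  have hSA : Module.finrank ℂ SA = sA.card := finrank_span_image _ _
  have hSB : Module.finrank ℂ SB = sB.card := finrank_span_image _ _
  have hE : Module.finrank ℂ (EuclideanSpace ℂ (Fin n)) = n := by
    simp [finrank_euclideanSpace]
  have hK : Module.finrank ℂ K + (A - B).rank = n := by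
    rw [hKdef]
    have := LinearMap.finrank_range_add_finrank_ker (Matrix.toEuclideanLin (A - B))
    rw [finrank_range_toEuclideanLin, hE] at this
    omega
  have h1 : Module.finrank ℂ ↑(SA ⊔ SB) + Module.finrank ℂ ↑(SA ⊓ SB)
      = Module.finrank ℂ SA + Module.finrank ℂ SB :=
    Submodule.finrank_sup_add_finrank_inf_eq SA SB
  have h1' : Module.finrank ℂ ↑(SA ⊔ SB) ≤ n :=
    le_trans (Submodule.finrank_le _) (le_of_eq hE)
  have h2 : Module.finrank ℂ ↑((SA ⊓ SB) ⊔ K) + Module.finrank ℂ ↑((SA ⊓ SB) ⊓ K)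
      = Module.finrank ℂ ↑(SA ⊓ SB) + Module.finrank ℂ K :=
    Submodule.finrank_sup_add_finrank_inf_eq _ _
  have h2' : Module.finrank ℂ ↑((SA ⊓ SB) ⊔ K) ≤ n :=
    le_trans (Submodule.finrank_le _) (le_of_eq hE)
  have hpos : 0 < Module.finrank ℂ ↑((SA ⊓ SB) ⊓ K) := by omega
  obtain ⟨⟨v, hv⟩, hv0⟩ := Module.finrank_pos_iff_exists_ne_zero.1 hpos
  have hvnz : v ≠ 0 := fun h => hv0 (Subtype.ext h)
  obtain ⟨⟨hvA, hvB⟩, hvK⟩ := hv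
  rw [hKdef] at hvK
  have hAB : Matrix.toEuclideanLin A v = Matrix.toEuclideanLin B v := by
    have : Matrix.toEuclideanLin (A - B) v = 0 := hvK
    rw [map_sub] at this
    simpa [sub_eq_zero] using this
  have hle : Complex.re (inner ℂ v (Matrix.toEuclideanLin A v)) ≤ x * ‖v‖ ^ 2 :=
    re_le_of_mem_span hA hvA
  have hlt : x * ‖v‖ ^ 2 < Complex.re (inner ℂ v (Matrix.toEuclideanLin B v)) :=
    lt_re_of_mem_span hB hvB hvnz
  rw [hAB] at hle
  linarith

lemma rank_sub_comm (A B : Matrix (Fin n) (Fin n) ℂ) : (B - A).rank = (A - B).rank := by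
  have h : B - A = -(A - B) := by abel
  rw [h]
  have hm : (-(A - B)).mulVecLin = -((A - B).mulVecLin) := by
    ext v i
    simp [Matrix.mulVecLin_apply, Matrix.neg_mulVec]
  unfold Matrix.rank
  rw [hm, LinearMap.range_neg]

end Aux

theorem rank_inequality {n : ℕ} (A B : Matrix (Fin n) (Fin n) ℂ)
    (hA : A.IsHermitian) (hB : B.IsHermitian) :
    ∀ x : ℝ, |specDistFun hA x - specDistFun hB x| ≤ ((A - B).rank : ℝ) / n := by
  intro x
  have h1 := card_le_card_add_rank A B hA hB x
  have h2 := card_le_card_add_rank B A hB hA x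
  rw [rank_sub_comm] at h2
  unfold specDistFun
  rcases Nat.eq_zero_or_pos n with hn | hn
  · subst hn
    simp
  · have hnR : (0:ℝ) < n := by exact_mod_cast hn
    rw [div_sub_div_same, abs_div, abs_of_pos hnR, div_le_div_iff_of_pos_right hnR]
    rw [abs_sub_le_iff]
    constructor
    · have : ((Finset.univ.filter fun i => hA.eigenvalues i ≤ x).card : ℝ)
        ≤ (Finset.univ.filter fun i => hB.eigenvalues i ≤ x).card + (A - B).rank := by
        exact_mod_cast h1
      linarith
    · have : ((Finset.univ.filter fun i => hB.eigenvalues i ≤ x).card : ℝ)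
        ≤ (Finset.univ.filter fun i => hA.eigenvalues i ≤ x).card + (A - B).rank := by
        exact_mod_cast h2
      linarith
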